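/- Let G be a connected graph containing an induced subgraph isomorphic to K_2 + K_1, with the K_2 on vertices x,y and the isolated vertex z (so xy is an edge, and z is nonadjacent to both x and y). Then G contains an induced subgraph isomorphic to P_4 or to the paw (triangle plus a pendant vertex). -/

import Mathlib

open SimpleGraph

universe u
variable {V : Type u}

/-- The diamond graph: `K₄` minus the edge `{0,1}`; its tips are `0` and `1`. -/
def diamondGraph : SimpleGraph (Fin 4) :=
  SimpleGraph.fromRel (fun a b =>
    (a = 0 ∧ b = 2) ∨ (a = 0 ∧ b = 3) ∨ (a = 1 ∧ b = 2) ∨ (a = 1 ∧ b = 3) ∨ (a = 2 ∧ b = 3))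

/-- The path on four vertices. -/
def pathGraph4 : SimpleGraph (Fin 4) :=
  SimpleGraph.fromRel (fun a b => (a = 0 ∧ b = 1) ∨ (a = 1 ∧ b = 2) ∨ (a = 2 ∧ b = 3))

/-- The paw: a triangle `0,1,2` plus a pendant vertex `3` adjacent to `0`. -/
def pawGraph : SimpleGraph (Fin 4) :=
  SimpleGraph.fromRel (fun a b =>
    (a = 0 ∧ b = 1) ∨ (a = 1 ∧ b = 2) ∨ (a = 0 ∧ b = 2) ∨ (a = 0 ∧ b = 3))

/-- `K₂ + K₁`: an edge `0-1` and an isolated vertex `2`. -/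
def k2k1Graph : SimpleGraph (Fin 3) :=
  SimpleGraph.fromRel (fun a b => a = 0 ∧ b = 1)

/-- The chordless cycle on four vertices. -/
def cycleGraph4 : SimpleGraph (Fin 4) :=
  SimpleGraph.fromRel (fun a b =>
    (a = 0 ∧ b = 1) ∨ (a = 1 ∧ b = 2) ∨ (a = 2 ∧ b = 3) ∨ (a = 3 ∧ b = 0))

/-- `P₄ + K₁`: a path `0-1-2-3` and an isolated vertex `4`. -/
def p4k1Graph : SimpleGraph (Fin 5) :=
  SimpleGraph.fromRel (fun a b => (a = 0 ∧ b = 1) ∨ (a = 1 ∧ b = 2) ∨ (a = 2 ∧ b = 3))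

/-- `P₃ + 2K₁`: a path `0-1-2` and isolated vertices `3,4`. -/
def p3TwoK1Graph : SimpleGraph (Fin 5) :=
  SimpleGraph.fromRel (fun a b => (a = 0 ∧ b = 1) ∨ (a = 1 ∧ b = 2))

/-- `2K₂ + K₁`: edges `0-1` and `2-3`, and an isolated vertex `4`. -/
def twoK2K1Graph : SimpleGraph (Fin 5) :=
  SimpleGraph.fromRel (fun a b => (a = 0 ∧ b = 1) ∨ (a = 2 ∧ b = 3))

/-- `(K, S)` is a complete split partition of the subgraph of `G` induced by the set `A`:
`K ∪ S = A`, `K` and `S` are disjoint, `K` is a clique, `S` is independent, and `K` is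
complete to `S`. -/
def IsCSPartWithin (G : SimpleGraph V) (A K S : Set V) : Prop :=
  K ∪ S = A ∧ Disjoint K S ∧
    (∀ a ∈ K, ∀ b ∈ K, a ≠ b → G.Adj a b) ∧
    (∀ a ∈ S, ∀ b ∈ S, ¬ G.Adj a b) ∧
    (∀ a ∈ K, ∀ b ∈ S, G.Adj a b)

/-- A graph is a complete split graph if it admits a complete split partition. -/
def IsCompleteSplit (G : SimpleGraph V) : Prop :=
  ∃ K S : Set V, IsCSPartWithin G Set.univ K S

/-- The vertex set of the connected component of the subgraph of `G` induced by `A`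
containing the vertex `z`. -/
def compSet (G : SimpleGraph V) (A : Set V) (z : V) : Set V :=
  {w | w ∈ A ∧ Relation.ReflTransGen (fun a b => G.Adj a b ∧ a ∈ A ∧ b ∈ A) z w}

/-- `G` is locally union of complete split: for every vertex `v`, every connected component
of the subgraph induced by the open neighborhood of `v` is a complete split graph. -/
def LUCS (G : SimpleGraph V) : Prop :=
  ∀ v : V, ∀ z ∈ G.neighborSet v,
    ∃ K S : Set V, IsCSPartWithin G (compSet G (G.neighborSet v) z) K S

/-- `x` is a tip of some induced diamond of `G`. -/
def IsTip (G : SimpleGraph V) (x : V) : Prop :=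
  ∃ f : diamondGraph ↪g G, x = f 0 ∨ x = f 1

/-- The set `N_G` of vertices of `G` that are tips of induced diamonds. -/
def tipSet (G : SimpleGraph V) : Set V := {x | IsTip G x}

/-- `x` and `y` are the two tips of a common induced diamond of `G`. -/
def TipPair (G : SimpleGraph V) (x y : V) : Prop :=
  ∃ f : diamondGraph ↪g G, (x = f 0 ∧ y = f 1) ∨ (x = f 1 ∧ y = f 0)

/-- `G` has no induced diamond. -/
def DiamondFree (G : SimpleGraph V) : Prop := IsEmpty (diamondGraph ↪g G)

/-- `N` is an independent set of `G`. -/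
def IsIndep (G : SimpleGraph V) (N : Set V) : Prop := ∀ x ∈ N, ∀ y ∈ N, ¬ G.Adj x y

/-- `G` is probe diamond-free: the vertices can be partitioned into probes and an
independent set `N` of nonprobes such that adding some set of non-edges with both
endpoints in `N` yields a diamond-free graph. -/
def ProbeDiamondFree (G : SimpleGraph V) : Prop :=
  ∃ N : Set V, IsIndep G N ∧ ∃ F : SimpleGraph V,
    (∀ x y : V, F.Adj x y → x ∈ N ∧ y ∈ N ∧ ¬ G.Adj x y) ∧ DiamondFree (G ⊔ F)


def embOfP4 {G : SimpleGraph V} {a b c d : V}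
    (hab : G.Adj a b) (hbc : G.Adj b c) (hcd : G.Adj c d)
    (hac : ¬G.Adj a c) (had : ¬G.Adj a d) (hbd : ¬G.Adj b d)
    (hac' : a ≠ c) (had' : a ≠ d) (hbd' : b ≠ d) :
    pathGraph4 ↪g G := by
  have hab' : a ≠ b := hab.ne
  have hbc' : b ≠ c := hbc.ne
  have hcd' : c ≠ d := hcd.ne
  refine ⟨⟨![a,b,c,d], ?_⟩, ?_⟩
  · intro i j h
    fin_cases i <;> fin_cases j <;> simp_all <;>
      first
        | rfl
        | (exact absurd h.symm (by assumption))
        | (exact absurd h (by assumption))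
  · intro i j
    fin_cases i <;> fin_cases j <;>
      simp [pathGraph4, SimpleGraph.fromRel_adj, G.adj_comm] <;>
      first
        | assumption
        | (exact fun h => absurd h (by simp_all [G.adj_comm]))
        | (exact hab.symm)
        | (constructor <;> simp_all [G.adj_comm, Ne.symm, eq_comm])

def embOfPaw {G : SimpleGraph V} {a b c d : V}
    (hab : G.Adj a b) (hbc : G.Adj b c) (hac : G.Adj a c) (had : G.Adj a d)
    (hbd : ¬G.Adj b d) (hcd : ¬G.Adj c d)
    (hbd' : b ≠ d) (hcd' : c ≠ d) :
    pawGraph ↪g G := by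
  have hab' : a ≠ b := hab.ne
  have hbc' : b ≠ c := hbc.ne
  have hac' : a ≠ c := hac.ne
  have had' : a ≠ d := had.ne
  refine ⟨⟨![a,b,c,d], ?_⟩, ?_⟩
  · intro i j h
    fin_cases i <;> fin_cases j <;> simp_all <;>
      first
        | rfl
        | (exact absurd h.symm (by assumption))
        | (exact absurd h (by assumption))
  · intro i j
    fin_cases i <;> fin_cases j <;>
      simp [pawGraph, SimpleGraph.fromRel_adj, G.adj_comm] <;>
      first
        | assumption
        | (exact fun h => absurd h (by simp_all [G.adj_comm]))
        | (exact hab.symm)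
        | (constructor <;> simp_all [G.adj_comm, Ne.symm, eq_comm])

lemma auxWalk (G : SimpleGraph V) (x y : V) (hxy : G.Adj x y) :
    ∀ (n : ℕ) (z : V) (p : G.Walk z x), p.length = n →
      ¬G.Adj z x → ¬G.Adj z y → z ≠ x → z ≠ y →
      Nonempty (pathGraph4 ↪g G) ∨ Nonempty (pawGraph ↪g G) := by
  intro n
  induction n with
  | zero =>
    intro z p hl _ _ hne _
    exact absurd (p.eq_of_length_eq_zero hl) hne
  | succ n ih =>
    intro z p hl hzx hzy hzx' hzy'
    cases p with
    | nil => simp at hl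
    | cons h q =>
      rename_i w
      have hwx' : w ≠ x := by rintro rfl; exact hzx h
      have hwy' : w ≠ y := by rintro rfl; exact hzy h
      by_cases hwx : G.Adj w x
      · by_cases hwy : G.Adj w y
        · -- paw: triangle w,x,y with pendant z at w
          exact Or.inr ⟨embOfPaw hwx hxy hwy h.symm
            (fun hh => hzx hh.symm) (fun hh => hzy hh.symm)
            (Ne.symm hzx') (Ne.symm hzy')⟩
        · -- P4: z - w - x - y
          exact Or.inl ⟨embOfP4 h hwx hxy hzx hzy hwy hzx' hzy' hwy'⟩
      · by_cases hwy : G.Adj w y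
        · -- P4: z - w - y - x
          exact Or.inl ⟨embOfP4 h hwy (hxy.symm) hzy hzx hwx hzy' hzx' hwx'⟩
        · exact ih w q (by simpa using hl) hwx hwy hwx' hwy'

theorem stmt5 (G : SimpleGraph V) (hconn : G.Connected) (x y z : V)
    (hxy : G.Adj x y) (hzx : ¬ G.Adj z x) (hzy : ¬ G.Adj z y)
    (hzx' : z ≠ x) (hzy' : z ≠ y) :
    Nonempty (pathGraph4 ↪g G) ∨ Nonempty (pawGraph ↪g G) := by
  obtain ⟨p⟩ := (hconn z x)
  exact auxWalk G x y hxy p.length z p rfl hzx hzy hzx' hzy'
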